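/- Let (Ω, ℱ, ℙ) be a probability space, S a finite set, p ≥ 1 an integer, and Z, Z' : Ω → S random variables. Let b : S → ℝ^p, A : S × S → (p×p real matrices), T : S × S → ℝ, and v : S → ℝ^p. Let W : Ω → ℝ^p be an integrable random vector and define W' := b(Z') + A(Z, Z')·W. Assume: (i) ℙ(Z = i and Z' = j) = T_{i,j} · ℙ(Z = i) for all i, j ∈ S; (ii) 𝔼[W · 1_{Z = i, Z' = j}] = ℙ(Z = i and Z' = j) · v_j for all i, j ∈ S; (iii) 𝔼[W' · 1_{Z = i}] = ℙ(Z = i) · v_i for all i ∈ S. Then for every i ∈ S with ℙ(Z = i) > 0, it holds that v_i = Σ_{j ∈ S} T_{i,j} · (b_j + A_{i,j} · v_j). -/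

import Mathlib

open MeasureTheory

/-- Let `(Ω, ℱ, ℙ)` be a probability space, `S` a finite set, `p ≥ 1` an
integer, and `Z, Z' : Ω → S` random variables. Let `b : S → ℝ^p`,
`A : S × S → (p×p real matrices)`, `T : S × S → ℝ`, and `v : S → ℝ^p`. Let `W : Ω → ℝ^p`
be an integrable random vector and define `W' := b(Z') + A(Z, Z')·W`. Assume:
(i) `ℙ(Z = i and Z' = j) = T_{i,j} · ℙ(Z = i)` for all `i, j ∈ S`;
(ii) `𝔼[W · 1_{Z = i, Z' = j}] = ℙ(Z = i and Z' = j) · v_j` for all `i, j ∈ S`;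
(iii) `𝔼[W' · 1_{Z = i}] = ℙ(Z = i) · v_i` for all `i ∈ S`.
Then for every `i ∈ S` with `ℙ(Z = i) > 0`, it holds that
`v_i = Σ_{j ∈ S} T_{i,j} · (b_j + A_{i,j} · v_j)`.
(Expectations of `ℝ^p`-valued random variables are componentwise Bochner integrals.) -/
theorem stmt8 {Ω : Type*} [MeasurableSpace Ω] (μ : Measure Ω) [IsProbabilityMeasure μ]
    {S : Type*} [Fintype S] [MeasurableSpace S] [MeasurableSingletonClass S]
    (p : ℕ) (hp : 1 ≤ p)
    (Z Z' : Ω → S) (hZ : Measurable Z) (hZ' : Measurable Z')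
    (b : S → Fin p → ℝ) (A : S → S → Matrix (Fin p) (Fin p) ℝ)
    (T : S → S → ℝ) (v : S → Fin p → ℝ)
    (W : Ω → Fin p → ℝ) (hW : Integrable W μ)
    (hT : ∀ i j, (μ {ω | Z ω = i ∧ Z' ω = j}).toReal = T i j * (μ {ω | Z ω = i}).toReal)
    (hWcond : ∀ i j,
      (∫ ω in {ω | Z ω = i ∧ Z' ω = j}, W ω ∂μ) =
        (μ {ω | Z ω = i ∧ Z' ω = j}).toReal • v j)
    (hstat : ∀ i,
      (∫ ω in {ω | Z ω = i}, (b (Z' ω) + (A (Z ω) (Z' ω)).mulVec (W ω)) ∂μ) =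
        (μ {ω | Z ω = i}).toReal • v i) :
    ∀ i, 0 < (μ {ω | Z ω = i}).toReal →
      v i = ∑ j, T i j • (b j + (A i j).mulVec (v j)) := by

  intro i hi
  classical
  have hmeas : ∀ (k l : S), MeasurableSet {ω | Z ω = k ∧ Z' ω = l} := fun k l =>
    (hZ (measurableSet_singleton k)).inter (hZ' (measurableSet_singleton l))
  have hmZ : ∀ k : S, MeasurableSet {ω | Z ω = k} := fun k =>
    hZ (measurableSet_singleton k)
  let L : S → S → ((Fin p → ℝ) →L[ℝ] (Fin p → ℝ)) := fun k l =>
    LinearMap.toContinuousLinearMap (Matrix.mulVecLin (A k l))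
  have hLapp : ∀ k l x, L k l x = (A k l).mulVec x := fun k l x => rfl
  have hIntW : ∀ k l, Integrable (fun ω => (A k l).mulVec (W ω)) μ := fun k l =>
    (L k l).integrable_comp hW
  have hInt : ∀ k l, Integrable (fun ω => b l + (A k l).mulVec (W ω)) μ := fun k l =>
    (integrable_const _).add (hIntW k l)
  -- pointwise decomposition
  have hsum : ∀ ω, b (Z' ω) + (A (Z ω) (Z' ω)).mulVec (W ω)
      = ∑ k, ∑ l, Set.indicator {ω | Z ω = k ∧ Z' ω = l}
          (fun ω => b l + (A k l).mulVec (W ω)) ω := by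
    intro ω
    rw [Finset.sum_eq_single (Z ω)]
    · rw [Finset.sum_eq_single (Z' ω)]
      · rw [Set.indicator_of_mem (by exact ⟨rfl, rfl⟩)]
      · intro l _ hne
        apply Set.indicator_of_notMem
        simp [hne.symm]
      · intro h; exact absurd (Finset.mem_univ _) h
    · intro k _ hne
      apply Finset.sum_eq_zero
      intro l _
      apply Set.indicator_of_notMem
      simp [hne.symm]
    · intro h; exact absurd (Finset.mem_univ _) h
  -- integral over each piece
  have hpiece : ∀ l, (∫ ω in {ω | Z ω = i ∧ Z' ω = l},
      (b l + (A i l).mulVec (W ω)) ∂μ)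
      = (μ {ω | Z ω = i ∧ Z' ω = l}).toReal • (b l + (A i l).mulVec (v l)) := by
    intro l
    rw [integral_add (integrable_const _).integrableOn ((hIntW i l).integrableOn)]
    rw [setIntegral_const]
    have : (∫ ω in {ω | Z ω = i ∧ Z' ω = l}, (A i l).mulVec (W ω) ∂μ)
        = (A i l).mulVec (∫ ω in {ω | Z ω = i ∧ Z' ω = l}, W ω ∂μ) := by
      have := ContinuousLinearMap.integral_comp_comm (L i l)
        (hW.restrict (s := {ω | Z ω = i ∧ Z' ω = l}))
      simpa [hLapp] using this
    rw [this, hWcond i l, Matrix.mulVec_smul, smul_add]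
    rfl
  -- decompose the integral over {Z = i}
  have hdecomp : (∫ ω in {ω | Z ω = i},
      (b (Z' ω) + (A (Z ω) (Z' ω)).mulVec (W ω)) ∂μ)
      = ∑ l, (μ {ω | Z ω = i ∧ Z' ω = l}).toReal • (b l + (A i l).mulVec (v l)) := by
    have h1 : (∫ ω in {ω | Z ω = i},
        (b (Z' ω) + (A (Z ω) (Z' ω)).mulVec (W ω)) ∂μ)
        = ∑ k, ∑ l, ∫ ω in {ω | Z ω = i},
            Set.indicator {ω | Z ω = k ∧ Z' ω = l}
              (fun ω => b l + (A k l).mulVec (W ω)) ω ∂μ := by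
      rw [show (fun ω => b (Z' ω) + (A (Z ω) (Z' ω)).mulVec (W ω))
          = fun ω => ∑ k, ∑ l, Set.indicator {ω | Z ω = k ∧ Z' ω = l}
              (fun ω => b l + (A k l).mulVec (W ω)) ω from funext hsum]
      rw [integral_finset_sum _ (fun k _ => (integrable_finset_sum _ fun l _ =>
        ((hInt k l).indicator (hmeas k l))).integrableOn)]
      exact Finset.sum_congr rfl fun k _ => integral_finset_sum _
        (fun l _ => ((hInt k l).indicator (hmeas k l)).integrableOn)
    rw [h1]
    rw [Finset.sum_eq_single i]
    · refine Finset.sum_congr rfl fun l _ => ?_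
      rw [setIntegral_indicator (hmeas i l)]
      have hset : {ω | Z ω = i} ∩ {ω | Z ω = i ∧ Z' ω = l}
          = {ω | Z ω = i ∧ Z' ω = l} := by
        ext ω; simp (config := {contextual := true}) [Set.mem_setOf_eq]
      rw [hset, hpiece l]
    · intro k _ hne
      apply Finset.sum_eq_zero
      intro l _
      rw [setIntegral_indicator (hmeas k l)]
      have hset : {ω | Z ω = i} ∩ {ω | Z ω = k ∧ Z' ω = l} = (∅ : Set Ω) := by
        ext ω; simp only [Set.mem_inter_iff, Set.mem_setOf_eq, Set.mem_empty_iff_false,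
          iff_false, not_and]
        rintro rfl rfl _; exact hne rfl
      rw [hset]
      simp
    · intro h; exact absurd (Finset.mem_univ _) h
  -- combine
  have hmain : (μ {ω | Z ω = i}).toReal • v i
      = (μ {ω | Z ω = i}).toReal • ∑ l, T i l • (b l + (A i l).mulVec (v l)) := by
    rw [← hstat i, hdecomp, Finset.smul_sum]
    refine Finset.sum_congr rfl fun l _ => ?_
    rw [hT i l, mul_smul, smul_comm]
  exact smul_right_injective (Fin p → ℝ) (ne_of_gt hi) hmain
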